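/- An instance of CTG-2 (all groups of size at most 2) admits a Traditional Strong Equilibrium if and only if the associated stable-roommate instance on P ∪ P′ (constructed by duplicating each player) admits a stable matching. In particular, from a TSE given by pairs (a₁,b₁),…,(a_k,b_k) and singletons c₁,…,c_ℓ, a stable matching is obtained by matching each a_i with b_i, each c_i with its copy c_i′, and matching the remaining even set of copies along a circle; conversely, a stable matching yields a TSE by pairing exactly those x, z ∈ P matched together and letting each x matched with its copy x′ travel alone. -/

import Mathlib

open Finset

variable {n : ℕ}


lemma cdist_val {N : ℕ} (x y : Fin N) :
    ((y - x : Fin N) : ℕ) = if x.val ≤ y.val then y.val - x.val else y.val + N - x.val := by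
  have hx := x.isLt; have hy := y.isLt
  rw [Fin.coe_sub]
  rcases le_or_gt x.val y.val with h | h
  · rw [if_pos h]
    have he : N - x.val + y.val = N + (y.val - x.val) := by omega
    rw [he, Nat.add_mod_left, Nat.mod_eq_of_lt (by omega)]
  · rw [if_neg (by omega), Nat.mod_eq_of_lt (by omega)]
    omega

lemma cdist_lt_iff {N : ℕ} (x a b : Fin N) (ha : a ≠ x) (hb : b ≠ x) :
    ((a - x : Fin N) : ℕ) < ((b - x : Fin N) : ℕ) ↔
      ((x < a ∧ (a < b ∨ b < x)) ∨ (a < x ∧ b < x ∧ a < b)) := by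
  have ha' : a.val ≠ x.val := fun h => ha (Fin.ext h)
  have hb' : b.val ≠ x.val := fun h => hb (Fin.ext h)
  have h1 := x.isLt; have h2 := a.isLt; have h3 := b.isLt
  rw [cdist_val, cdist_val]
  simp only [Fin.lt_def]
  split_ifs <;> omega

lemma cdist_add {N : ℕ} (x y : Fin N) (h : x ≠ y) :
    ((y - x : Fin N) : ℕ) + ((x - y : Fin N) : ℕ) = N := by
  have h' : x.val ≠ y.val := fun hh => h (Fin.ext hh)
  have h1 := x.isLt; have h2 := y.isLt
  rw [cdist_val, cdist_val]
  split_ifs <;> omega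

lemma circle_matching {N : ℕ} (S : Finset (Fin N)) (m : ℕ) (hcard : S.card = 2 * m) :
    ∃ f : Fin N → Fin N, (∀ x ∈ S, f x ∈ S) ∧ (∀ x ∈ S, f x ≠ x) ∧ (∀ x ∈ S, f (f x) = x) ∧
      ∀ x ∈ S, ∀ y ∈ S, x ≠ y →
        ¬ (((y - x : Fin N) : ℕ) < ((f x - x : Fin N) : ℕ) ∧
           ((x - y : Fin N) : ℕ) < ((f y - y : Fin N) : ℕ)) := by
  classical
  rcases Nat.eq_zero_or_pos m with rfl | hm
  · have hS : S = ∅ := Finset.card_eq_zero.mp (by simpa using hcard)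
    subst hS
    exact ⟨id, by simp, by simp, by simp, by simp⟩
  · haveI : NeZero (2 * m) := ⟨by omega⟩
    set e := S.orderIsoOfFin hcard with he
    set M0 : Fin (2 * m) := ⟨m, by omega⟩ with hM0
    have hM0ne : ∀ i : Fin (2 * m), i + M0 ≠ i := by
      intro i h
      have h0 : M0 = 0 := by
        have := left_eq_add.mp (congrArg id h.symm)
        exact this
      have : (M0 : Fin (2*m)).val = 0 := by rw [h0]; rfl
      simp [hM0] at this
      omega
    have hM00 : M0 + M0 = (0 : Fin (2 * m)) := by
      apply Fin.ext
      rw [Fin.val_add]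
      simp only [hM0]
      show (m + m) % (2 * m) = (0 : Fin (2*m)).val
      rw [show m + m = 2 * m by omega, Nat.mod_self]
      rfl
    refine ⟨fun x => if hx : x ∈ S then ((e (e.symm ⟨x, hx⟩ + M0)) : Fin N) else x,
      ?_, ?_, ?_, ?_⟩
    · intro x hx; dsimp only; rw [dif_pos hx]; exact (e _).2
    · intro x hx h
      dsimp only at h
      rw [dif_pos hx] at h
      have : e (e.symm ⟨x, hx⟩ + M0) = ⟨x, hx⟩ := Subtype.ext h
      have h2 : e.symm ⟨x, hx⟩ + M0 = e.symm ⟨x, hx⟩ := by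
        have := congrArg e.symm this
        rwa [e.symm_apply_apply] at this
      exact hM0ne _ h2
    · intro x hx
      dsimp only
      have h1 : (if hx' : x ∈ S then ((e (e.symm ⟨x, hx'⟩ + M0)) : Fin N) else x) ∈ S := by
        rw [dif_pos hx]; exact (e _).2
      rw [dif_pos hx, dif_pos ((e (e.symm ⟨x, hx⟩ + M0)).2)]
      have hsub : (⟨((e (e.symm ⟨x, hx⟩ + M0)) : Fin N), (e (e.symm ⟨x, hx⟩ + M0)).2⟩ : {a // a ∈ S})
          = e (e.symm ⟨x, hx⟩ + M0) := Subtype.ext rfl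
      rw [hsub, e.symm_apply_apply, add_assoc, hM00, add_zero, e.apply_symm_apply]
    · intro x hx y hy hxy hblock
      obtain ⟨hb1, hb2⟩ := hblock
      dsimp only at hb1 hb2
      rw [dif_pos hx] at hb1
      rw [dif_pos hy] at hb2
      set i := e.symm ⟨x, hx⟩ with hi
      set j := e.symm ⟨y, hy⟩ with hj
      have hij : i ≠ j := by
        intro h
        apply hxy
        have := congrArg (fun t => ((e t : Fin N))) h
        simp only [hi, hj, OrderIso.apply_symm_apply] at this
        exact this
      have hex : ((e i : Fin N)) = x := by rw [hi, e.apply_symm_apply]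
      have hey : ((e j : Fin N)) = y := by rw [hj, e.apply_symm_apply]
      -- transfer lemma
      have hlt : ∀ a b : Fin (2 * m), (((e a : Fin N)) < ((e b : Fin N)) ↔ a < b) := by
        intro a b
        rw [Subtype.coe_lt_coe, e.lt_iff_lt]
      have htrans : ∀ p q r : Fin (2 * m), q ≠ p → r ≠ p →
          (((((e q : Fin N)) - (e p : Fin N) : Fin N) : ℕ) < ((((e r : Fin N)) - (e p : Fin N) : Fin N) : ℕ) ↔
            ((q - p : Fin (2 * m)) : ℕ) < ((r - p : Fin (2 * m)) : ℕ)) := by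
        intro p q r hq hr
        rw [cdist_lt_iff _ _ _
            (fun h => hq (e.injective (Subtype.ext h)))
            (fun h => hr (e.injective (Subtype.ext h))),
          cdist_lt_iff _ _ _ hq hr]
        simp only [hlt]
      have hiM : ((i + M0 - i : Fin (2 * m)) : ℕ) = m := by
        rw [add_sub_cancel_left]
      have hjM : ((j + M0 - j : Fin (2 * m)) : ℕ) = m := by
        rw [add_sub_cancel_left]
      have h1 : ((j - i : Fin (2 * m)) : ℕ) < m := by
        have := (htrans i j (i + M0) (Ne.symm hij) (hM0ne i)).mp (by rw [hex, hey]; exact hb1)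
        rwa [hiM] at this
      have h2 : ((i - j : Fin (2 * m)) : ℕ) < m := by
        have := (htrans j i (j + M0) hij (hM0ne j)).mp (by rw [hex, hey]; exact hb2)
        rwa [hjM] at this
      have := cdist_add i j hij
      omega

lemma even_card_of_invol {α : Type*} [DecidableEq α] (g : α → α) :
    ∀ S : Finset α, (∀ x ∈ S, g x ∈ S ∧ g x ≠ x ∧ g (g x) = x) → Even S.card := by
  intro S
  induction S using Finset.strongInduction with
  | _ S ih =>
    intro hg
    rcases S.eq_empty_or_nonempty with rfl | ⟨x, hx⟩
    · simp
    · obtain ⟨hg1, hg2, hg3⟩ := hg x hx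
      have hsub : ({x, g x} : Finset α) ⊆ S := by
        intro y hy
        rcases Finset.mem_insert.mp hy with rfl | hy
        · exact hx
        · rw [Finset.mem_singleton.mp hy]; exact hg1
      have hss : S \ {x, g x} ⊂ S := Finset.sdiff_ssubset hsub ⟨x, by simp⟩
      have hrec : Even (S \ {x, g x}).card := by
        apply ih _ hss
        intro y hy
        obtain ⟨hyS, hyn⟩ := Finset.mem_sdiff.mp hy
        obtain ⟨h1, h2, h3⟩ := hg y hyS
        refine ⟨Finset.mem_sdiff.mpr ⟨h1, ?_⟩, h2, h3⟩
        simp only [Finset.mem_insert, Finset.mem_singleton] at hyn ⊢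
        push_neg at hyn ⊢
        obtain ⟨hy1, hy2⟩ := hyn
        constructor
        · intro he; apply hy2; rw [← h3, he]
        · intro he; apply hy1; rw [← h3, he, hg3]
      have h2c : ({x, g x} : Finset α).card = 2 := Finset.card_pair (Ne.symm hg2)
      have hle := Finset.card_le_card hsub
      have hcount : S.card = (S \ {x, g x}).card + 2 := by
        rw [Finset.card_sdiff_of_subset hsub, h2c]; omega
      rcases hrec with ⟨r, hr⟩
      exact ⟨r + 1, by omega⟩

/-- Preference key of original player `x ∈ P` over the duplicated player set `P ⊕ P′`
(smaller key = more preferred): real partners `y` and her own copy `x′` (travelling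
alone) come first, ordered by the CTG-2 costs `c x {x,y}` resp. `c x {x}`; then the other
copies (in circular order, which is irrelevant); her own entry comes last. -/
noncomputable def keyL (c : Fin n → Finset (Fin n) → ℝ) (x : Fin n) :
    (Fin n ⊕ Fin n) → ℕ ×ₗ ℝ
  | Sum.inl y => if y = x then toLex (2, 0) else toLex (0, c x ({x, y} : Finset (Fin n)))
  | Sum.inr y => if y = x then toLex (0, c x ({x} : Finset (Fin n)))
      else toLex (1, (((y - x : Fin n) : ℕ) : ℝ))

/-- Preference key of a copy `x′ ∈ P′`: the original `x` comes first, then the other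
copies in circular order `y′ ≺ z′ ↔ (y − x) mod n < (z − x) mod n`, then the remaining
originals (order irrelevant). -/
noncomputable def keyR (x : Fin n) : (Fin n ⊕ Fin n) → ℕ ×ₗ ℝ
  | Sum.inl y => if y = x then toLex (0, 0) else toLex (2, ((y : ℕ) : ℝ))
  | Sum.inr y => toLex (1, (((y - x : Fin n) : ℕ) : ℝ))

/-- Strict preference relation of the constructed stable-roommate instance. -/
noncomputable def key (c : Fin n → Finset (Fin n) → ℝ) :
    (Fin n ⊕ Fin n) → (Fin n ⊕ Fin n) → ℕ ×ₗ ℝ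
  | Sum.inl x => keyL c x
  | Sum.inr x => keyR x

/-- `pref c v a b`: player `v` strictly prefers `a` to `b`. -/
noncomputable def pref (c : Fin n → Finset (Fin n) → ℝ)
    (v a b : Fin n ⊕ Fin n) : Prop :=
  key c v a < key c v b

/-- A matching of the CTG-2 instance: coordinated groups of size at most 2. -/
def IsMatching2 (M : Fin n → Finset (Fin n)) : Prop :=
  (∀ i, i ∈ M i) ∧ (∀ i, (M i).card ≤ 2) ∧ ∀ i j, j ∈ M i → M j = M i

/-- Traditional Strong Equilibrium of the CTG-2 instance: for every feasible group `G`
(of size at most 2), either all members of `G` are matched together as `G`, or some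
member weakly prefers her current group. -/
def IsTSE2 (c : Fin n → Finset (Fin n) → ℝ) (M : Fin n → Finset (Fin n)) : Prop :=
  ∀ G : Finset (Fin n), G.Nonempty → G.card ≤ 2 →
    (∀ i ∈ G, M i = G) ∨ ∃ i ∈ G, c i (M i) ≤ c i G

/-- A stable matching of the constructed roommate instance: a fixed-point-free involution
of `P ⊕ P′` with no blocking pair. -/
def IsStableMatching (c : Fin n → Finset (Fin n) → ℝ)
    (μ : (Fin n ⊕ Fin n) → (Fin n ⊕ Fin n)) : Prop :=
  (∀ v, μ (μ v) = v) ∧ (∀ v, μ v ≠ v) ∧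
    ∀ a b, a ≠ b → μ a ≠ b → ¬ (pref c a b (μ a) ∧ pref c b a (μ b))

-- Evaluation lemmas for `key`.
lemma key_inl_inl (c : Fin n → Finset (Fin n) → ℝ) (x y : Fin n) (h : y ≠ x) :
    key c (Sum.inl x) (Sum.inl y) = toLex (0, c x ({x, y} : Finset (Fin n))) := by
  show keyL c x (Sum.inl y) = _
  simp [keyL, h]

lemma key_inl_inr_self (c : Fin n → Finset (Fin n) → ℝ) (x : Fin n) :
    key c (Sum.inl x) (Sum.inr x) = toLex (0, c x ({x} : Finset (Fin n))) := by
  show keyL c x (Sum.inr x) = _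
  simp [keyL]

lemma key_inl_inr (c : Fin n → Finset (Fin n) → ℝ) (x y : Fin n) (h : y ≠ x) :
    key c (Sum.inl x) (Sum.inr y) = toLex (1, (((y - x : Fin n) : ℕ) : ℝ)) := by
  show keyL c x (Sum.inr y) = _
  simp [keyL, h]

lemma key_inr_inl_self (c : Fin n → Finset (Fin n) → ℝ) (x : Fin n) :
    key c (Sum.inr x) (Sum.inl x) = toLex (0, (0 : ℝ)) := by
  show keyR x (Sum.inl x) = _
  simp [keyR]

lemma key_inr_inl (c : Fin n → Finset (Fin n) → ℝ) (x y : Fin n) (h : y ≠ x) :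
    key c (Sum.inr x) (Sum.inl y) = toLex (2, ((y : ℕ) : ℝ)) := by
  show keyR x (Sum.inl y) = _
  simp [keyR, h]

lemma key_inr_inr (c : Fin n → Finset (Fin n) → ℝ) (x y : Fin n) :
    key c (Sum.inr x) (Sum.inr y) = toLex (1, (((y - x : Fin n) : ℕ) : ℝ)) := by
  show keyR x (Sum.inr y) = _
  simp [keyR]

-- Lexicographic comparison helpers.
lemma lex_lt_zero {s t : ℝ} : toLex ((0 : ℕ), s) < toLex ((0 : ℕ), t) ↔ s < t := by
  rw [Prod.Lex.lt_iff]; simp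

lemma lex_le_zero {s t : ℝ} : toLex ((0 : ℕ), s) ≤ toLex ((0 : ℕ), t) ↔ s ≤ t := by
  rw [Prod.Lex.le_iff]; simp

lemma lex_lt_one {s t : ℝ} : toLex ((1 : ℕ), s) < toLex ((1 : ℕ), t) ↔ s < t := by
  rw [Prod.Lex.lt_iff]; simp

lemma lex_not_lt_one_zero {s t : ℝ} : ¬ (toLex ((1 : ℕ), s) < toLex ((0 : ℕ), t)) := by
  rw [Prod.Lex.lt_iff]; simp

lemma lex_lt_of_fst {s t : ℝ} {k l : ℕ} (h : k < l) : toLex (k, s) < toLex (l, t) :=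
  Prod.Lex.lt_iff.mpr (Or.inl h)

/-- An instance of CTG-2 (all groups of size at most 2, strict preferences) admits a
Traditional Strong Equilibrium if and only if the associated stable-roommate instance on
the duplicated player set `P ⊕ P′` admits a stable matching. -/
theorem CTG2_TSE_iff_stable_roommates
    (c : Fin n → Finset (Fin n) → ℝ)
    -- strict preferences: no ties among the relevant options of any player
    (hstrict₁ : ∀ x y z : Fin n, y ≠ z → y ≠ x → z ≠ x →
      c x ({x, y} : Finset (Fin n)) ≠ c x ({x, z} : Finset (Fin n)))
    (hstrict₂ : ∀ x y : Fin n, y ≠ x →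
      c x ({x, y} : Finset (Fin n)) ≠ c x ({x} : Finset (Fin n))) :
    (∃ M : Fin n → Finset (Fin n), IsMatching2 M ∧ IsTSE2 c M) ↔
      ∃ μ : (Fin n ⊕ Fin n) → (Fin n ⊕ Fin n), IsStableMatching c μ := by
  classical
  constructor
  · -- TSE → stable matching
    rintro ⟨M, ⟨hmem, hc2, hcoh⟩, htse⟩
    have hpair : ∀ x, M x ≠ {x} → ∃ z, z ≠ x ∧ M x = {x, z} := by
      intro x hx
      have hx1 : x ∈ M x := hmem x
      have hcard : (M x).card ≤ 2 := hc2 x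
      have hpos : 1 ≤ (M x).card := Finset.card_pos.mpr ⟨x, hx1⟩
      have h12 : (M x).card = 1 ∨ (M x).card = 2 := by omega
      rcases h12 with h | h
      · obtain ⟨a, ha⟩ := Finset.card_eq_one.mp h
        rw [ha] at hx1
        rw [Finset.mem_singleton] at hx1
        subst hx1
        exact absurd ha hx
      · obtain ⟨a, b, hab, hM⟩ := Finset.card_eq_two.mp h
        rw [hM] at hx1
        rcases Finset.mem_insert.mp hx1 with rfl | hx1
        · exact ⟨b, fun hb => hab hb.symm, hM⟩
        · rw [Finset.mem_singleton] at hx1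
          subst hx1
          exact ⟨a, hab, by rw [hM, Finset.pair_comm]⟩
    choose pa hpane hpaM using hpair
    set p : Fin n → Fin n := fun x => if h : M x = {x} then x else pa x h with hp
    have hpM : ∀ x, M x ≠ {x} → p x ≠ x ∧ M x = {x, p x} := by
      intro x h
      rw [hp]
      dsimp only
      rw [dif_neg h]
      exact ⟨hpane x h, hpaM x h⟩
    have hpmem : ∀ x, M x ≠ {x} → p x ∈ M x := by
      intro x h
      rw [(hpM x h).2]
      exact Finset.mem_insert_of_mem (Finset.mem_singleton_self _)
    have hMp : ∀ x, M x ≠ {x} → M (p x) = M x := fun x h => hcoh x (p x) (hpmem x h)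
    have hpS : ∀ x, M x ≠ {x} → M (p x) ≠ {p x} := by
      intro x h hq
      have h1 : x ∈ M (p x) := by rw [hMp x h]; exact hmem x
      rw [hq, Finset.mem_singleton] at h1
      exact (hpM x h).1 h1.symm
    have hpp : ∀ x, M x ≠ {x} → p (p x) = x := by
      intro x h
      have h' := hpS x h
      have h1 : p (p x) ∈ M (p x) := hpmem (p x) h'
      rw [hMp x h, (hpM x h).2] at h1
      rcases Finset.mem_insert.mp h1 with h2 | h2
      · exact h2
      · rw [Finset.mem_singleton] at h2
        exact absurd h2 (hpM (p x) h').1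
    set S : Finset (Fin n) := Finset.univ.filter (fun x => M x ≠ {x}) with hS
    have hSmem : ∀ x, x ∈ S ↔ M x ≠ {x} := by
      intro x; rw [hS, Finset.mem_filter]; simp
    have heven : Even S.card := by
      apply even_card_of_invol p
      intro x hx
      have h := (hSmem x).mp hx
      exact ⟨(hSmem (p x)).mpr (hpS x h), (hpM x h).1, hpp x h⟩
    obtain ⟨m, hm⟩ := heven
    have hcard : S.card = 2 * m := by omega
    obtain ⟨f, hf1, hf2, hf3, hf4⟩ := circle_matching S m hcard
    refine ⟨Sum.elim
      (fun x => if M x = {x} then Sum.inr x else Sum.inl (p x))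
      (fun x => if M x = {x} then Sum.inl x else Sum.inr (f x)), ?_, ?_, ?_⟩
    · -- involution
      intro v
      rcases v with x | x
      · by_cases h : M x = {x}
        · simp only [Sum.elim_inl, Sum.elim_inr, if_pos h]
        · simp only [Sum.elim_inl, Sum.elim_inr, if_neg h]
          rw [if_neg (hpS x h), hpp x h]
      · by_cases h : M x = {x}
        · simp only [Sum.elim_inr, Sum.elim_inl, if_pos h]
        · simp only [Sum.elim_inl, Sum.elim_inr, if_neg h]
          have hfx : M (f x) ≠ {f x} := (hSmem (f x)).mp (hf1 x ((hSmem x).mpr h))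
          rw [if_neg hfx, hf3 x ((hSmem x).mpr h)]
    · -- no fixed point
      intro v
      rcases v with x | x
      · by_cases h : M x = {x}
        · simp only [Sum.elim_inl, if_pos h]; simp
        · simp only [Sum.elim_inl, if_neg h]
          intro hh
          exact (hpM x h).1 (Sum.inl.inj hh)
      · by_cases h : M x = {x}
        · simp only [Sum.elim_inr, if_pos h]; simp
        · simp only [Sum.elim_inr, if_neg h]
          intro hh
          exact hf2 x ((hSmem x).mpr h) (Sum.inr.inj hh)
    · -- no blocking pair
      rintro a b hab hμab ⟨h1, h2⟩
      rcases a with x | x <;> rcases b with y | y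
      · -- original x vs original y
        have hxy : x ≠ y := fun h => hab (by rw [h])
        simp only [Sum.elim_inl] at h1 h2 hμab
        simp only [pref] at h1 h2
        rw [key_inl_inl c x y (Ne.symm hxy)] at h1
        rw [key_inl_inl c y x hxy] at h2
        have hcx : c x ({x, y} : Finset (Fin n)) < c x (M x) := by
          by_cases h : M x = {x}
          · rw [if_pos h, key_inl_inr_self] at h1
            rw [h]
            exact lex_lt_zero.mp h1
          · rw [if_neg h, key_inl_inl c x (p x) (hpM x h).1] at h1
            have := lex_lt_zero.mp h1
            rwa [← (hpM x h).2] at this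
        have hcy : c y ({y, x} : Finset (Fin n)) < c y (M y) := by
          by_cases h : M y = {y}
          · rw [if_pos h, key_inl_inr_self] at h2
            rw [h]
            exact lex_lt_zero.mp h2
          · rw [if_neg h, key_inl_inl c y (p y) (hpM y h).1] at h2
            have := lex_lt_zero.mp h2
            rwa [← (hpM y h).2] at this
        have hcards : ({x, y} : Finset (Fin n)).card ≤ 2 :=
          le_trans (Finset.card_insert_le _ _) (by simp)
        rcases htse {x, y} ⟨x, by simp⟩ hcards with hall | ⟨i, hi, hle⟩
        · have hMx : M x = {x, y} := hall x (by simp)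
          have hMne : M x ≠ {x} := by
            rw [hMx]
            intro hq
            have hy : y ∈ ({x} : Finset (Fin n)) := by
              rw [← hq]; exact Finset.mem_insert_of_mem (Finset.mem_singleton_self _)
            rw [Finset.mem_singleton] at hy
            exact hxy hy.symm
          have hpx : p x = y := by
            have h3 : p x ∈ M x := hpmem x hMne
            rw [hMx] at h3
            rcases Finset.mem_insert.mp h3 with h4 | h4
            · exact absurd h4 (hpM x hMne).1
            · exact Finset.mem_singleton.mp h4
          exact hμab (by rw [if_neg hMne, hpx])
        · rcases Finset.mem_insert.mp hi with rfl | hi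
          · exact absurd hle (not_le.mpr hcx)
          · rw [Finset.mem_singleton] at hi
            subst hi
            rw [Finset.pair_comm i x] at hcy
            exact absurd hle (not_le.mpr hcy)
      · -- original x vs copy y
        simp only [Sum.elim_inl, Sum.elim_inr] at h1 h2 hμab
        simp only [pref] at h1
        by_cases hyx : y = x
        · subst hyx
          by_cases h : M y = {y}
          · exact hμab (by rw [if_pos h])
          · have hx1 : c y ({y} : Finset (Fin n)) < c y (M y) := by
              rw [key_inl_inr_self, if_neg h, key_inl_inl c y (p y) (hpM y h).1] at h1
              have := lex_lt_zero.mp h1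
              rwa [← (hpM y h).2] at this
            rcases htse {y} ⟨y, by simp⟩ (by simp) with hall | ⟨i, hi, hle⟩
            · exact h (hall y (by simp))
            · rw [Finset.mem_singleton] at hi
              subst hi
              exact absurd hle (not_le.mpr hx1)
        · rw [key_inl_inr c x y hyx] at h1
          by_cases h : M x = {x}
          · rw [if_pos h, key_inl_inr_self] at h1
            exact lex_not_lt_one_zero h1
          · rw [if_neg h, key_inl_inl c x (p x) (hpM x h).1] at h1
            exact lex_not_lt_one_zero h1
      · -- copy x vs original y
        simp only [Sum.elim_inl, Sum.elim_inr] at h1 h2 hμab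
        simp only [pref] at h2
        by_cases hxy : x = y
        · subst hxy
          by_cases h : M x = {x}
          · rw [if_pos h] at h2
            exact lt_irrefl _ h2
          · have hx1 : c x ({x} : Finset (Fin n)) < c x (M x) := by
              rw [key_inl_inr_self, if_neg h, key_inl_inl c x (p x) (hpM x h).1] at h2
              have := lex_lt_zero.mp h2
              rwa [← (hpM x h).2] at this
            rcases htse {x} ⟨x, by simp⟩ (by simp) with hall | ⟨i, hi, hle⟩
            · exact h (hall x (by simp))
            · rw [Finset.mem_singleton] at hi
              subst hi
              exact absurd hle (not_le.mpr hx1)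
        · rw [key_inl_inr c y x hxy] at h2
          by_cases h : M y = {y}
          · rw [if_pos h, key_inl_inr_self] at h2
            exact lex_not_lt_one_zero h2
          · rw [if_neg h, key_inl_inl c y (p y) (hpM y h).1] at h2
            exact lex_not_lt_one_zero h2
      · -- copy x vs copy y
        have hxy : x ≠ y := fun h => hab (by rw [h])
        simp only [Sum.elim_inr] at h1 h2 hμab
        simp only [pref] at h1 h2
        by_cases hx : M x = {x}
        · rw [if_pos hx, key_inr_inr, key_inr_inl_self] at h1
          exact lex_not_lt_one_zero h1
        by_cases hy : M y = {y}
        · rw [if_pos hy, key_inr_inr, key_inr_inl_self] at h2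
          exact lex_not_lt_one_zero h2
        rw [if_neg hx, key_inr_inr, key_inr_inr] at h1
        rw [if_neg hy, key_inr_inr, key_inr_inr] at h2
        have hb1 : ((y - x : Fin n) : ℕ) < ((f x - x : Fin n) : ℕ) := by
          exact_mod_cast lex_lt_one.mp h1
        have hb2 : ((x - y : Fin n) : ℕ) < ((f y - y : Fin n) : ℕ) := by
          exact_mod_cast lex_lt_one.mp h2
        exact hf4 x ((hSmem x).mpr hx) y ((hSmem y).mpr hy) hxy ⟨hb1, hb2⟩
  · -- stable matching → TSE
    rintro ⟨μ, hinv, hnf, hstab⟩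
    set M : Fin n → Finset (Fin n) := fun x =>
      Sum.elim (fun z => ({x, z} : Finset (Fin n))) (fun _ => ({x} : Finset (Fin n)))
        (μ (Sum.inl x)) with hM
    have hMl : ∀ x z, μ (Sum.inl x) = Sum.inl z → M x = {x, z} := by
      intro x z h; rw [hM]; dsimp only; rw [h]; rfl
    have hMr : ∀ x w, μ (Sum.inl x) = Sum.inr w → M x = {x} := by
      intro x w h; rw [hM]; dsimp only; rw [h]; rfl
    have hzne : ∀ x z, μ (Sum.inl x) = Sum.inl z → z ≠ x := by
      intro x z h hz; exact hnf (Sum.inl x) (by rw [h, hz])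
    have hsymm : ∀ x z, μ (Sum.inl x) = Sum.inl z → μ (Sum.inl z) = Sum.inl x := by
      intro x z h
      have h2 := hinv (Sum.inl x)
      rw [h] at h2
      exact h2
    have hopt : ∀ i j : Fin n, j ≠ i →
        ¬ pref c (Sum.inl i) (Sum.inl j) (μ (Sum.inl i)) →
        c i (M i) ≤ c i ({i, j} : Finset (Fin n)) := by
      intro i j hji hnp
      simp only [pref, not_lt] at hnp
      rw [key_inl_inl c i j hji] at hnp
      rcases h : μ (Sum.inl i) with z | w
      · rw [h, key_inl_inl c i z (hzne i z h)] at hnp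
        rw [hMl i z h]
        exact lex_le_zero.mp hnp
      · by_cases hwi : w = i
        · rw [hwi] at h
          rw [h, key_inl_inr_self] at hnp
          rw [hMr i i h]
          exact lex_le_zero.mp hnp
        · rw [h, key_inl_inr c i w hwi] at hnp
          exact absurd hnp (by rw [Prod.Lex.le_iff]; simp)
    have hsingleton : ∀ a z, μ (Sum.inl a) = Sum.inl z →
        c a (M a) ≤ c a ({a} : Finset (Fin n)) := by
      intro a z h
      have hab : (Sum.inl a : Fin n ⊕ Fin n) ≠ Sum.inr a := by simp
      have hμab : μ (Sum.inl a) ≠ Sum.inr a := by rw [h]; simp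
      have hs := hstab (Sum.inl a) (Sum.inr a) hab hμab
      have hμr : μ (Sum.inr a) ≠ Sum.inl a := by
        intro hq
        have h3 := hinv (Sum.inr a)
        rw [hq, h] at h3
        exact absurd h3 (by simp)
      have hpref2 : pref c (Sum.inr a) (Sum.inl a) (μ (Sum.inr a)) := by
        simp only [pref]
        rw [key_inr_inl_self]
        rcases hq : μ (Sum.inr a) with u | v
        · have hu : u ≠ a := fun he => hμr (by rw [hq, he])
          rw [key_inr_inl c a u hu]
          exact lex_lt_of_fst (by norm_num)
        · rw [key_inr_inr]
          exact lex_lt_of_fst (by norm_num)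
      have hnp1 : ¬ pref c (Sum.inl a) (Sum.inr a) (μ (Sum.inl a)) :=
        fun hp => hs ⟨hp, hpref2⟩
      simp only [pref, not_lt] at hnp1
      rw [key_inl_inr_self, h, key_inl_inl c a z (hzne a z h)] at hnp1
      rw [hMl a z h]
      exact lex_le_zero.mp hnp1
    refine ⟨M, ⟨?_, ?_, ?_⟩, ?_⟩
    · intro i
      rcases h : μ (Sum.inl i) with z | w
      · rw [hMl i z h]; exact Finset.mem_insert_self _ _
      · rw [hMr i w h]; exact Finset.mem_singleton_self _
    · intro i
      rcases h : μ (Sum.inl i) with z | w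
      · rw [hMl i z h]
        exact le_trans (Finset.card_insert_le _ _) (by simp)
      · rw [hMr i w h]; simp
    · intro i j hj
      rcases h : μ (Sum.inl i) with z | w
      · rw [hMl i z h] at hj ⊢
        rcases Finset.mem_insert.mp hj with rfl | hj'
        · exact hMl j z h
        · rw [Finset.mem_singleton] at hj'
          subst hj'
          rw [hMl j i (hsymm i j h), Finset.pair_comm]
      · rw [hMr i w h] at hj ⊢
        rw [Finset.mem_singleton] at hj
        subst hj
        exact hMr j w h
    · intro G hGne hGcard
      have hGpos : 1 ≤ G.card := Finset.card_pos.mpr hGne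
      have hGc : G.card = 1 ∨ G.card = 2 := by omega
      rcases hGc with hGc | hGc
      · obtain ⟨a, rfl⟩ := Finset.card_eq_one.mp hGc
        rcases h : μ (Sum.inl a) with z | w
        · exact Or.inr ⟨a, Finset.mem_singleton_self a, hsingleton a z h⟩
        · left
          intro i hi
          rw [Finset.mem_singleton] at hi
          subst hi
          exact hMr i w h
      · obtain ⟨a, b, hab, rfl⟩ := Finset.card_eq_two.mp hGc
        by_cases hμab : μ (Sum.inl a) = Sum.inl b
        · left
          intro i hi
          rcases Finset.mem_insert.mp hi with rfl | hi'
          · exact hMl i b hμab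
          · rw [Finset.mem_singleton] at hi'
            subst hi'
            rw [hMl i a (hsymm a i hμab), Finset.pair_comm]
        · have hs := hstab (Sum.inl a) (Sum.inl b) (fun h => hab (Sum.inl.inj h)) hμab
          rcases not_and_or.mp hs with h | h
          · exact Or.inr ⟨a, by simp, hopt a b (Ne.symm hab) h⟩
          · right
            refine ⟨b, by simp, ?_⟩
            have h4 := hopt b a hab h
            rwa [Finset.pair_comm b a] at h4
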